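/- Given the connectivity reduction: if for every wCM complex Y of dimension m the r-tupling Dʳ(Y) is ((m−2r)/(r+1))-connected, then for every wCM complex X of dimension n and every p-simplex τ of Dʳ(X), the link of τ in Dʳ(X) is at least (⌊(n−r+1)/(r+1)⌋ − p − 2)-connected. -/
import Mathlib


open CategoryTheory

/-- An abstract simplicial complex on a vertex type `V`: a collection of nonempty
finite subsets of `V` closed under passing to nonempty subsets. -/
structure ASC (V : Type) [DecidableEq V] where
  faces : Set (Finset V)
  nonempty_of_mem : ∀ s ∈ faces, s.Nonempty
  down_closed : ∀ s ∈ faces, ∀ t ⊆ s, t.Nonempty → t ∈ faces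

namespace ASC

variable {V W : Type} [DecidableEq V] [DecidableEq W]

/-- The vertex set of a simplicial complex. -/
def verts (X : ASC V) : Set V := {v | {v} ∈ X.faces}

/-- The full simplex on a (finite) vertex type; `simplexOn (Fin (n+1))` is `Δⁿ`. -/
def simplexOn (V : Type) [DecidableEq V] : ASC V where
  faces := {s | s.Nonempty}
  nonempty_of_mem := fun _ h => h
  down_closed := fun _ _ _ _ h => h

/-- The link of a (possible) simplex `σ`: all faces disjoint from `σ` whose union
with `σ` is again a face. -/
def link (X : ASC V) (σ : Finset V) : ASC V where
  faces := {t | t ∈ X.faces ∧ Disjoint t σ ∧ t ∪ σ ∈ X.faces}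
  nonempty_of_mem := fun s hs => X.nonempty_of_mem s hs.1
  down_closed := by
    rintro s ⟨hs, hd, hu⟩ t hts ht
    refine ⟨X.down_closed s hs t hts ht, hd.mono_left hts, ?_⟩
    exact X.down_closed _ hu _ (Finset.union_subset_union_left hts)
      ⟨ht.choose, Finset.mem_union_left _ ht.choose_spec⟩

/-- The `r`-tupling `Dʳ(X)` of a simplicial complex `X`: vertices are the
`(r-1)`-simplices of `X` (faces with `r` vertices), and a collection of such is a
simplex iff they are pairwise disjoint and their union is a face of `X`. -/
def tupling (X : ASC V) (r : ℕ) : ASC (Finset V) where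
  faces := {S | S.Nonempty ∧ (∀ τ ∈ S, τ ∈ X.faces ∧ τ.card = r) ∧
      ((S : Set (Finset V)).Pairwise Disjoint) ∧ S.biUnion id ∈ X.faces}
  nonempty_of_mem := fun _ h => h.1
  down_closed := by
    rintro S ⟨hS, hmem, hdisj, hun⟩ T hTS hT
    refine ⟨hT, fun τ hτ => hmem τ (hTS hτ), hdisj.mono (by exact_mod_cast hTS), ?_⟩
    refine X.down_closed _ hun _ (Finset.biUnion_subset_biUnion_of_subset_left _ hTS) ?_
    obtain ⟨τ, hτ⟩ := hT
    obtain ⟨v, hv⟩ := X.nonempty_of_mem τ (hmem τ (hTS hτ)).1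
    exact ⟨v, Finset.mem_biUnion.2 ⟨τ, hτ, hv⟩⟩

/-- The double of a simplicial complex. -/
def double (X : ASC V) : ASC (Finset V) := X.tupling 2

/-- The underlying face poset of a simplicial complex, ordered by inclusion. -/
def facePoset (X : ASC V) : Type := {s : Finset V // s ∈ X.faces}

instance (X : ASC V) : PartialOrder X.facePoset :=
  Subtype.partialOrder _

/-- The geometric realization of a simplicial complex, realized as the geometric
realization of the nerve of its face poset (i.e. of its barycentric subdivision). -/
noncomputable def space (X : ASC V) : TopCat :=
  SSet.toTop.obj (nerve X.facePoset)

end ASC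

/-- A topological space is `k`-connected (`k : ℤ`) if it is nonempty (for `k ≥ -1`)
and all its homotopy groups `π_i` for `i ≤ k` are trivial. -/
def IsNConnected (k : ℤ) (T : Type*) [TopologicalSpace T] : Prop :=
  (-1 ≤ k → Nonempty T) ∧
    ∀ (n : ℕ) (x : T), (n : ℤ) ≤ k → Subsingleton (HomotopyGroup (Fin n) T x)

/-- A simplicial complex is weakly Cohen–Macaulay of dimension `n` if it is
`(n-1)`-connected and the link of every `p`-simplex is `(n-p-2)`-connected. -/
def IsWCM {V : Type} [DecidableEq V] (X : ASC V) (n : ℤ) : Prop :=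
  IsNConnected (n - 1) X.space ∧
    ∀ s ∈ X.faces, IsNConnected (n - s.card - 1) (X.link s).space

namespace ASC

variable {V W : Type} [DecidableEq V] [DecidableEq W]

/-- An isomorphism of simplicial complexes: a bijection between the vertex sets
carrying simplices to simplices in both directions. -/
structure Iso (X : ASC V) (Y : ASC W) where
  toEquiv : X.verts ≃ Y.verts
  map_faces : ∀ s : Finset X.verts,
    s.image Subtype.val ∈ X.faces ↔ (s.image toEquiv).image Subtype.val ∈ Y.faces

/-- `X_m`: the order complex of the poset of simplices of `X` with at least `m`
vertices, ordered by inclusion. -/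
def ordered (X : ASC V) (m : ℕ) : ASC (Finset V) where
  faces := {S | S.Nonempty ∧ (∀ s ∈ S, s ∈ X.faces ∧ m ≤ s.card) ∧
      IsChain (· ⊆ ·) (S : Set (Finset V))}
  nonempty_of_mem := fun _ h => h.1
  down_closed := by
    rintro S ⟨hS, hmem, hchain⟩ T hTS hT
    exact ⟨hT, fun s hs => hmem s (hTS hs),
      fun a ha b hb hab => hchain (hTS ha) (hTS hb) hab⟩

/-- The subcomplex of `X_m` consisting of chains of simplices of `X` (with at
least `m` vertices is not imposed here; any predicate `P` cuts out a region). -/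
def regionComplex (X : ASC V) (P : Finset V → Prop) : ASC (Finset V) where
  faces := {S | S.Nonempty ∧ (∀ s ∈ S, s ∈ X.faces ∧ P s) ∧
      IsChain (· ⊆ ·) (S : Set (Finset V))}
  nonempty_of_mem := fun _ h => h.1
  down_closed := by
    rintro S ⟨hS, hmem, hchain⟩ T hTS hT
    exact ⟨hT, fun s hs => hmem s (hTS hs),
      fun a ha b hb hab => hchain (hTS ha) (hTS hb) hab⟩

/-- The join of a finite family of simplicial complexes on a common vertex type:
simplices are the (nonempty) unions of one simplex-or-empty-set from each factor. -/
def joinFam {ι : Type} [Fintype ι] [DecidableEq ι] (Y : ι → ASC V) : ASC V where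
  faces := {s | s.Nonempty ∧ ∃ f : ι → Finset V,
      (∀ i, f i = ∅ ∨ f i ∈ (Y i).faces) ∧ s = Finset.univ.biUnion f}
  nonempty_of_mem := fun _ h => h.1
  down_closed := by
    rintro s ⟨-, f, hf, rfl⟩ t hts ht
    refine ⟨ht, fun i => f i ∩ t, fun i => ?_, ?_⟩
    · by_cases h : (f i ∩ t).Nonempty
      · rcases hf i with h' | h'
        · simp [h'] 
        · exact Or.inr ((Y i).down_closed _ h' _ Finset.inter_subset_left h)
      · exact Or.inl (Finset.not_nonempty_iff_eq_empty.1 h)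
    · ext a
      simp only [Finset.mem_biUnion, Finset.mem_univ, true_and, Finset.mem_inter]
      constructor
      · intro hat
        obtain ⟨i, -, hai⟩ := Finset.mem_biUnion.1 (hts hat)
        exact ⟨i, hai, hat⟩
      · rintro ⟨i, -, hat⟩; exact hat

/-- The boundary `∂Δᵏ` of the `k`-simplex: all nonempty proper subsets of the
`k+1` vertices. -/
def boundary (k : ℕ) : ASC (Fin (k + 1)) where
  faces := {s | s.Nonempty ∧ s ≠ Finset.univ}
  nonempty_of_mem := fun _ h => h.1
  down_closed := by
    rintro s ⟨-, hs⟩ t hts ht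
    refine ⟨ht, fun h => hs ?_⟩
    subst h
    exact Finset.univ_subset_iff.1 hts

end ASC

/-- The matching complex of a simple graph: vertices the edges (as 2-element
vertex sets), simplices the collections of pairwise disjoint edges. -/
def matchingComplex {V : Type} [DecidableEq V] (G : SimpleGraph V) : ASC (Finset V) where
  faces := {S | S.Nonempty ∧ (∀ e ∈ S, ∃ a b, G.Adj a b ∧ e = {a, b}) ∧
      (S : Set (Finset V)).Pairwise Disjoint}
  nonempty_of_mem := fun _ h => h.1
  down_closed := by
    rintro S ⟨hS, hmem, hdisj⟩ T hTS hT
    exact ⟨hT, fun e he => hmem e (hTS he), hdisj.mono (by exact_mod_cast hTS)⟩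

/-- The `r`-hypergraph matching complex `M_m(r)`: vertices the `r`-element
subsets of an `m`-element set, simplices the collections of pairwise disjoint
such subsets. -/
def hypMatching (m r : ℕ) : ASC (Finset (Fin m)) where
  faces := {S | S.Nonempty ∧ (∀ e ∈ S, e.card = r) ∧
      (S : Set (Finset (Fin m))).Pairwise Disjoint}
  nonempty_of_mem := fun _ h => h.1
  down_closed := by
    rintro S ⟨hS, hmem, hdisj⟩ T hTS hT
    exact ⟨hT, fun e he => hmem e (hTS he), hdisj.mono (by exact_mod_cast hTS)⟩

open ASC

theorem ASC.faces_ext {V : Type} [DecidableEq V] {X Y : ASC V} (h : X.faces = Y.faces) :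
    X = Y := by
  cases X; cases Y; cases h; rfl

theorem IsNConnected.mono {k k' : ℤ} {T : Type*} [TopologicalSpace T]
    (h : IsNConnected k T) (hk : k' ≤ k) : IsNConnected k' T :=
  ⟨fun h' => h.1 (h'.trans hk), fun n x hn => h.2 n x (hn.trans hk)⟩

/-- Link of a simplex in the link is a link in the original complex. -/
theorem ASC.link_link {V : Type} [DecidableEq V] (X : ASC V) (σ : Finset V)
    (s : Finset V) (hs : s ∈ (X.link σ).faces) :
    (X.link σ).link s = X.link (s ∪ σ) := by
  obtain ⟨hsX, hsσ, hsu⟩ := hs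
  apply ASC.faces_ext
  ext t
  constructor
  · rintro ⟨⟨htX, htσ, htu⟩, hts, ⟨htsX, htsσ, htsu⟩⟩
    refine ⟨htX, Finset.disjoint_union_right.2 ⟨hts, htσ⟩, ?_⟩
    rwa [← Finset.union_assoc]
  · rintro ⟨htX, htd, htu⟩
    obtain ⟨hts, htσ⟩ := Finset.disjoint_union_right.1 htd
    have htne : t.Nonempty := X.nonempty_of_mem t htX
    rw [← Finset.union_assoc] at htu
    have h1 : t ∪ σ ∈ X.faces :=
      X.down_closed _ htu _ (by intro x hx; simp at hx ⊢; tauto)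
        ⟨htne.choose, by simp [htne.choose_spec]⟩
    have h2 : t ∪ s ∈ X.faces :=
      X.down_closed _ htu _ (by intro x hx; simp at hx ⊢; tauto)
        ⟨htne.choose, by simp [htne.choose_spec]⟩
    exact ⟨⟨htX, htσ, h1⟩, hts, h2, Finset.disjoint_union_left.2 ⟨htσ, hsσ⟩, htu⟩

/-- The link of a simplex `τ` of the `r`-tupling is the `r`-tupling of the link
of the underlying simplex `δ(τ)`. -/
theorem ASC.link_tupling {V : Type} [DecidableEq V] (X : ASC V) (r : ℕ) (hr : 1 ≤ r)
    (τ : Finset (Finset V)) (hτ : τ ∈ (X.tupling r).faces) :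
    (X.tupling r).link τ = (X.link (τ.biUnion id)).tupling r := by
  obtain ⟨hτne, hτmem, hτdisj, hτun⟩ := hτ
  apply ASC.faces_ext
  ext S
  have hbu : ∀ T : Finset (Finset V), (S ∪ T).biUnion id = S.biUnion id ∪ T.biUnion id := by
    intro T; ext x
    simp only [Finset.mem_biUnion, Finset.mem_union, id_eq]
    constructor
    · rintro ⟨a, ha | ha, hx⟩
      exacts [Or.inl ⟨a, ha, hx⟩, Or.inr ⟨a, ha, hx⟩]
    · rintro (⟨a, ha, hx⟩ | ⟨a, ha, hx⟩)
      exacts [⟨a, Or.inl ha, hx⟩, ⟨a, Or.inr ha, hx⟩]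
  constructor
  · rintro ⟨⟨hSne, hSmem, hSdisj, hSun⟩, hdisjSτ, ⟨-, hUmem, hUdisj, hUun⟩⟩
    rw [hbu] at hUun
    have hσδ : ∀ σ ∈ S, Disjoint σ (τ.biUnion id) := by
      intro σ hσ
      rw [Finset.disjoint_biUnion_right]
      intro σ' hσ'
      refine hUdisj (by simp [hσ]) (by simp [hσ']) ?_
      rintro rfl
      exact Finset.disjoint_left.1 hdisjSτ hσ hσ'
    refine ⟨hSne, fun σ hσ => ⟨⟨(hSmem σ hσ).1, hσδ σ hσ, ?_⟩, (hSmem σ hσ).2⟩,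
      hSdisj, hSun, ?_, hUun⟩
    · refine X.down_closed _ hUun _ ?_ ?_
      · exact Finset.union_subset_union_left
          (fun x hx => Finset.mem_biUnion.2 ⟨σ, hσ, hx⟩)
      · obtain ⟨v, hv⟩ := X.nonempty_of_mem σ (hSmem σ hσ).1
        exact ⟨v, Finset.mem_union_left _ hv⟩
    · rw [Finset.disjoint_biUnion_left]
      exact fun σ hσ => hσδ σ hσ
  · rintro ⟨hSne, hSmem, hSdisj, ⟨hUX, hUdisj, hUun⟩⟩
    have hσne : ∀ σ ∈ S, σ.Nonempty := fun σ hσ => X.nonempty_of_mem σ (hSmem σ hσ).1.1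
    have hSδ : ∀ σ ∈ S, Disjoint σ (τ.biUnion id) := fun σ hσ => (hSmem σ hσ).1.2.1
    have hdisjSτ : Disjoint S τ := by
      rw [Finset.disjoint_left]
      intro σ hσ hστ
      obtain ⟨v, hv⟩ := hσne σ hσ
      exact Finset.disjoint_left.1 (hSδ σ hσ) hv (Finset.mem_biUnion.2 ⟨σ, hστ, hv⟩)
    refine ⟨⟨hSne, fun σ hσ => ⟨(hSmem σ hσ).1.1, (hSmem σ hσ).2⟩, hSdisj, hUX⟩,
      hdisjSτ, ⟨hSne.mono Finset.subset_union_left, ?_, ?_, ?_⟩⟩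
    · intro σ hσ
      rcases Finset.mem_union.1 hσ with h | h
      · exact ⟨(hSmem σ h).1.1, (hSmem σ h).2⟩
      · exact hτmem σ h
    · intro σ hσ σ' hσ' hne
      simp only [Finset.coe_union, Set.mem_union, Finset.mem_coe] at hσ hσ'
      rcases hσ with h | h <;> rcases hσ' with h' | h'
      · exact hSdisj h h' hne
      · exact Finset.disjoint_of_subset_right
          (fun x hx => Finset.mem_biUnion.2 ⟨σ', h', hx⟩) (hSδ σ h)
      · exact (Finset.disjoint_of_subset_right
          (fun x hx => Finset.mem_biUnion.2 ⟨σ, h, hx⟩) (hSδ σ' h')).symm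
      · exact hτdisj h h' hne
    · rw [hbu]; exact hUun

/-- The link of `δ(τ)` in a wCM complex is wCM of the appropriate dimension. -/
theorem ASC.isWCM_link {V : Type} [DecidableEq V] (X : ASC V) (n : ℤ) (hX : IsWCM X n)
    (σ : Finset V) (hσ : σ ∈ X.faces) : IsWCM (X.link σ) (n - σ.card - 1) := by
  constructor
  · exact (hX.2 σ hσ).mono (by omega)
  · intro s hs
    rw [X.link_link σ s hs]
    have hcard : (s ∪ σ).card = s.card + σ.card := Finset.card_union_of_disjoint hs.2.1
    have := hX.2 (s ∪ σ) hs.2.2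
    rw [hcard] at this
    exact this.mono (by push_cast; omega)

theorem statement10 {V : Type} [DecidableEq V] (r : ℕ) (hr : 1 ≤ r)
    (H : ∀ (m : ℤ) (Y : ASC V), IsWCM Y m →
      IsNConnected (Int.fdiv (m - 2 * r) (r + 1)) (Y.tupling r).space)
    (X : ASC V) (n : ℤ) (hX : IsWCM X n)
    (p : ℕ) (τ : Finset (Finset V)) (hτ : τ ∈ (X.tupling r).faces) (hp : τ.card = p + 1) :
    IsNConnected (Int.fdiv (n - r + 1) (r + 1) - p - 2) ((X.tupling r).link τ).space := by
  set δ := τ.biUnion id with hδ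
  have hδcard : δ.card = r * (p + 1) := by
    have hcb := Finset.card_biUnion (s := τ) (t := id)
      (fun x hx y hy hxy => hτ.2.2.1 hx hy hxy)
    rw [hδ, hcb]
    simp only [id_eq]
    rw [Finset.sum_congr rfl (fun σ hσ => (hτ.2.1 σ hσ).2), Finset.sum_const, hp,
      smul_eq_mul, mul_comm]
  have hwcm := X.isWCM_link n hX δ hτ.2.2.2
  have hcon := H (n - δ.card - 1) _ hwcm
  rw [X.link_tupling r hr τ hτ]
  refine hcon.mono ?_
  have hd : (0:ℤ) < (r:ℤ) + 1 := by positivity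
  rw [Int.fdiv_eq_ediv_of_nonneg _ hd.le, Int.fdiv_eq_ediv_of_nonneg _ hd.le, hδcard]
  push_cast
  calc (n - r + 1) / ((r:ℤ) + 1) - p - 2
      = ((n - r + 1) + (-(p:ℤ) - 2) * ((r:ℤ) + 1)) / ((r:ℤ) + 1) := by
        rw [Int.add_mul_ediv_right _ _ hd.ne']; ring
    _ ≤ (n - (r:ℤ) * ((p:ℤ) + 1) - 1 - 2 * r) / ((r:ℤ) + 1) :=
        Int.ediv_le_ediv hd (by nlinarith [Int.natCast_nonneg p])
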